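/- Conversely, if f_i = 0 (1 ≤ i ≤ r) are invariant algebraic curves of X with cofactors k_i, the f_i pairwise coprime, and H = f1^{λ1} ⋯ fr^{λr} (λ_i positive integers) is a first integral of X, then Σ_{i=1}^r λ_i k_i = 0. -/

import Mathlib

open MvPolynomial

lemma aux_pow_deriv (p q g c : MvPolynomial (Fin 2) ℂ)
    (h : p * pderiv 0 g + q * pderiv 1 g = c * g) (m : ℕ) :
    p * pderiv 0 (g ^ (m + 1)) + q * pderiv 1 (g ^ (m + 1)) =
      ((m + 1 : ℕ) : MvPolynomial (Fin 2) ℂ) * c * g ^ (m + 1) := by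
  rw [pderiv_pow, pderiv_pow]
  simp only [Nat.add_sub_cancel, pow_succ]
  push_cast
  linear_combination (((m : MvPolynomial (Fin 2) ℂ) + 1) * g ^ m) * h

lemma aux_prod_deriv {r : ℕ} (p q : MvPolynomial (Fin 2) ℂ)
    (f k : Fin r → MvPolynomial (Fin 2) ℂ)
    (hinv : ∀ i, p * pderiv 0 (f i) + q * pderiv 1 (f i) = k i * f i)
    (lam : Fin r → ℕ) (hlam : ∀ i, 0 < lam i) (s : Finset (Fin r)) :
    p * pderiv 0 (∏ i ∈ s, f i ^ lam i) + q * pderiv 1 (∏ i ∈ s, f i ^ lam i) =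
      (∑ i ∈ s, (lam i : MvPolynomial (Fin 2) ℂ) * k i) * ∏ i ∈ s, f i ^ lam i := by
  induction s using Finset.induction with
  | empty => simp
  | insert _ _ hns ih =>
    rename_i a s
    rw [Finset.prod_insert hns, Finset.sum_insert hns, pderiv_mul, pderiv_mul]
    obtain ⟨m, hm⟩ := Nat.exists_eq_succ_of_ne_zero (hlam a).ne'
    have h1 := aux_pow_deriv p q (f a) (k a) (hinv a) m
    rw [hm]
    simp only [Nat.succ_eq_add_one]
    linear_combination (∏ i ∈ s, f i ^ lam i) * h1 + (f a ^ (m + 1)) * ih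

/-- Converse: if `fᵢ = 0` are invariant curves of `X` with cofactors `kᵢ`, the `fᵢ` pairwise
coprime and non-constant, and `H = ∏ fᵢ^{λᵢ}` (with `λᵢ > 0`) is a first integral of `X`,
then `∑ λᵢ kᵢ = 0`. -/
theorem stmt_3 {r : ℕ} (p q : MvPolynomial (Fin 2) ℂ)
    (f k : Fin r → MvPolynomial (Fin 2) ℂ)
    (hfnc : ∀ i, (f i).totalDegree ≠ 0)
    (hcop : ∀ i j, i ≠ j → IsCoprime (f i) (f j))
    (hinv : ∀ i, p * pderiv 0 (f i) + q * pderiv 1 (f i) = k i * f i)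
    (lam : Fin r → ℕ) (hlam : ∀ i, 0 < lam i)
    (hfi : p * pderiv 0 (∏ i, f i ^ lam i) + q * pderiv 1 (∏ i, f i ^ lam i) = 0) :
    ∑ i, (lam i : MvPolynomial (Fin 2) ℂ) * k i = 0 := by
  have h := aux_prod_deriv p q f k hinv lam hlam Finset.univ
  rw [hfi] at h
  have hprod : (∏ i, f i ^ lam i) ≠ 0 := by
    apply Finset.prod_ne_zero_iff.mpr
    intro i _
    apply pow_ne_zero
    intro h0
    exact hfnc i (by simp [h0])
  exact (mul_eq_zero.mp h.symm).resolve_right hprod
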